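/- Let K = −K ⊂ ℝ^{2n} be a centrally symmetric convex body and E its Loewner–Behrend–John ellipsoid satisfying (1/√(2n))E ⊆ K ⊆ E. Assuming monotonicity of the Gutt–Hutchings capacities, their scaling law c_k(λE) = λ² c_k(E) for dilation by λ, and c_{ni+1}(E) ≥ (i+1)c_1(E) for ellipsoids, it follows that c^{GH}_{2n²+1}(K) > c^{GH}_1(K), hence ind_sys^{S¹}(K) ≤ 2n². -/
import Mathlib


open Set Pointwise

/-- For a centrally symmetric convex body `K = −K` with Loewner–Behrend–John
ellipsoid `E` satisfying `(1/√(2n))E ⊆ K ⊆ E`, monotonicity of the capacities, the scaling law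
`c_k(λE) = λ²c_k(E)`, and `c_{ni+1}(E) ≥ (i+1)c_1(E)` imply `c_{2n²+1}(K) > c_1(K)`, hence
`ind_sys(K) ≤ 2n²`. -/
theorem stmt_16 {n : ℕ} (hn : 0 < n)
    (c : ℕ → Set (EuclideanSpace ℝ (Fin (2*n))) → ℝ)
    (E K : Set (EuclideanSpace ℝ (Fin (2*n))))
    (hEconv : Convex ℝ E) (hEcomp : IsCompact E)
    (hKconv : Convex ℝ K) (hKcomp : IsCompact K)
    (hsymm : K = -K)
    (hincl₁ : (Real.sqrt (2*n))⁻¹ • E ⊆ K) (hincl₂ : K ⊆ E)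
    (hmonotone : ∀ (k : ℕ) (A B : Set (EuclideanSpace ℝ (Fin (2*n)))),
      Convex ℝ A → Convex ℝ B → A ⊆ B → c k A ≤ c k B)
    (hscale : ∀ lam : ℝ, 0 < lam → ∀ k : ℕ, c k (lam • E) = lam^2 * c k E)
    (hell : ∀ i : ℕ, ((i : ℝ) + 1) * c 1 E ≤ c (n*i + 1) E)
    (hpos : 0 < c 1 E)
    (hmonoK : Monotone fun k => c k K) :
    c 1 K < c (2*n^2 + 1) K ∧ sSup {i : ℕ | 1 ≤ i ∧ c i K = c 1 K} ≤ 2*n^2 := by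
  set lam : ℝ := (Real.sqrt (2*n))⁻¹ with hlam
  have h2n : (0:ℝ) < 2*n := by positivity
  have hlampos : 0 < lam := by
    rw [hlam]
    exact inv_pos.mpr (Real.sqrt_pos.mpr h2n)
  have hlamsq : lam^2 = (2*(n:ℝ))⁻¹ := by
    rw [hlam, inv_pow, Real.sq_sqrt h2n.le]
  have hconvS : Convex ℝ (lam • E) := hEconv.smul lam
  have h1 : c 1 K ≤ c 1 E := hmonotone 1 K E hKconv hEconv hincl₂
  have h2 : c (2*n^2+1) (lam • E) ≤ c (2*n^2+1) K :=
    hmonotone _ _ _ hconvS hKconv hincl₁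
  have h3 : c (2*n^2+1) (lam • E) = lam^2 * c (2*n^2+1) E := hscale lam hlampos _
  have h4 : (2*(n:ℝ) + 1) * c 1 E ≤ c (2*n^2+1) E := by
    have := hell (2*n)
    have hidx : n*(2*n)+1 = 2*n^2+1 := by ring
    rw [hidx] at this
    push_cast at this
    linarith
  have key : c 1 K < c (2*n^2+1) K := by
    have hstep : c 1 E < lam^2 * c (2*n^2+1) E := by
      rw [hlamsq]
      have hge : (2*(n:ℝ))⁻¹ * ((2*(n:ℝ)+1) * c 1 E) ≤ (2*(n:ℝ))⁻¹ * c (2*n^2+1) E :=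
        mul_le_mul_of_nonneg_left h4 (by positivity)
      have hone : c 1 E < (2*(n:ℝ))⁻¹ * ((2*(n:ℝ)+1) * c 1 E) := by
        rw [← mul_assoc]
        have : (1:ℝ) < (2*(n:ℝ))⁻¹ * (2*(n:ℝ)+1) := by
          rw [inv_mul_eq_div]
          rw [lt_div_iff₀ h2n]
          linarith
        nlinarith
      linarith
    calc c 1 K ≤ c 1 E := h1
      _ < lam^2 * c (2*n^2+1) E := hstep
      _ = c (2*n^2+1) (lam • E) := h3.symm
      _ ≤ c (2*n^2+1) K := h2
  refine ⟨key, csSup_le ⟨1, le_refl 1, rfl⟩ ?_⟩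
  intro i hi
  obtain ⟨hi1, hieq⟩ := hi
  by_contra hlt
  push_neg at hlt
  have hige : 2*n^2+1 ≤ i := by omega
  have := hmonoK hige
  simp only at this
  rw [hieq] at this
  linarith
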